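/- Time-reversal identity: for every fixed t > 0, the random vector (A_t, exp(-2 B_t) · A_t) has the same distribution as (exp(-2 B_t) · A_t, A_t). -/

import Mathlib

open MeasureTheory ProbabilityTheory Real Filter Set Topology
open scoped NNReal ENNReal

noncomputable section

/-- A standard linear Brownian motion started from `0`, on a probability space `Ω`:
measurable in `ω` at each time, starts at `0`, has a.s. continuous paths, Gaussian
increments `B t - B s ~ N(0, t - s)` for `0 ≤ s ≤ t`, and independent increments. -/
structure IsBrownianMotion {Ω : Type*} [MeasureSpace Ω] (B : ℝ → Ω → ℝ) : Prop where
  meas : ∀ t, Measurable (B t)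
  init : ∀ᵐ ω ∂(ℙ : Measure Ω), B 0 ω = 0
  cont : ∀ᵐ ω ∂(ℙ : Measure Ω), Continuous fun t => B t ω
  incr : ∀ s t : ℝ, 0 ≤ s → s ≤ t →
    Measure.map (fun ω => B t ω - B s ω) ℙ = gaussianReal 0 (Real.toNNReal (t - s))
  indep : ∀ (n : ℕ) (t : Fin (n + 1) → ℝ), Monotone t → 0 ≤ t 0 →
    iIndepFun
      (fun i : Fin n => fun ω => B (t i.succ) ω - B (t i.castSucc) ω) ℙ

/-- The exponential functional `A_t = ∫_0^t exp (2 B_s) ds` of a linear Brownian motion. -/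
def expFunctional {Ω : Type*} [MeasureSpace Ω] (B : ℝ → Ω → ℝ) (t : ℝ) (ω : Ω) : ℝ :=
  ∫ s in (0:ℝ)..t, Real.exp (2 * B s ω)

/-- The σ-algebra generated by a process. -/
def processSigma {Ω : Type*} [MeasureSpace Ω] (B : ℝ → Ω → ℝ) : MeasurableSpace Ω :=
  ⨆ t : ℝ, MeasurableSpace.comap (B t) inferInstance

theorem ae_ne_real (t : ℝ) : ∀ᵐ (x : ℝ), x ≠ t := by
  have h : ({t} : Set ℝ) = {x | ¬ x ≠ t} := by ext; simp
  rw [ae_iff, ← h]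
  exact measure_singleton t

/-- Tagged Riemann sums of a continuous function converge to the interval integral. -/
theorem riemann_tendsto {g : ℝ → ℝ} (hg : Continuous g) {t : ℝ} (ht : 0 < t)
    (ξ : ℕ → ℕ → ℝ)
    (hξ : ∀ (n k : ℕ), k < n → ξ n k ∈ Set.Icc ((k : ℝ) * t / n) (((k : ℝ) + 1) * t / n)) :
    Tendsto (fun n : ℕ => (t / n) * ∑ k ∈ Finset.range n, g (ξ n k)) atTop
      (𝓝 (∫ s in (0:ℝ)..t, g s)) := by
  set st : ℕ → ℝ → ℝ := fun n s => g (ξ n ⌊s * n / t⌋₊) with hst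
  have hidx : ∀ (n : ℕ), 0 < n → ∀ s ∈ Set.Ioo (0:ℝ) t, ⌊s * n / t⌋₊ < n := by
    intro n h s hs
    have hs0 : (0:ℝ) < s := hs.1
    have hn0 : (0:ℝ) < n := by exact_mod_cast h
    have h1 : s * n / t < n := by
      rw [div_lt_iff₀ ht]
      nlinarith [hs.2]
    exact (Nat.floor_lt (by positivity)).mpr h1
  have hbrack : ∀ (n : ℕ), 0 < n → ∀ s ∈ Set.Ioo (0:ℝ) t,
      (⌊s * n / t⌋₊ : ℝ) * t / n ≤ s ∧ s ≤ ((⌊s * n / t⌋₊ : ℝ) + 1) * t / n := by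
    intro n hn s hs
    have hs0 : (0:ℝ) < s := hs.1
    have hn0 : (0:ℝ) < n := by exact_mod_cast hn
    have h0 : (0:ℝ) ≤ s * n / t := by positivity
    have hfl : (⌊s * n / t⌋₊ : ℝ) ≤ s * n / t := Nat.floor_le h0
    have hfu : s * n / t < (⌊s * n / t⌋₊ : ℝ) + 1 := Nat.lt_floor_add_one _
    constructor
    · rw [div_le_iff₀ hn0]
      calc (⌊s * n / t⌋₊ : ℝ) * t ≤ (s * n / t) * t := by nlinarith
        _ = s * n := by field_simp
    · rw [le_div_iff₀ hn0]
      calc s * n = (s * n / t) * t := by field_simp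
        _ ≤ ((⌊s * n / t⌋₊ : ℝ) + 1) * t := by nlinarith
  have htag : ∀ (n : ℕ), 0 < n → ∀ s ∈ Set.Ioo (0:ℝ) t, |ξ n ⌊s * n / t⌋₊ - s| ≤ t / n := by
    intro n hn s hs
    have hk := hξ n _ (hidx n hn s hs)
    have hb := hbrack n hn s hs
    have hid : ((⌊s * n / t⌋₊:ℝ) + 1) * t / n - (⌊s * n / t⌋₊:ℝ) * t / n = t / n := by ring
    rw [abs_le]
    exact ⟨by linarith [hk.1, hb.2], by linarith [hk.2, hb.1]⟩
  have htagmem : ∀ (n : ℕ), 0 < n → ∀ s ∈ Set.Ioo (0:ℝ) t,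
      ξ n ⌊s * n / t⌋₊ ∈ Set.Icc (0:ℝ) t := by
    intro n hn s hs
    have hk := hξ n _ (hidx n hn s hs)
    have hkn : (⌊s * n / t⌋₊ : ℝ) + 1 ≤ (n : ℝ) := by
      exact_mod_cast Nat.succ_le_of_lt (hidx n hn s hs)
    have hn0 : (0:ℝ) < n := by exact_mod_cast hn
    constructor
    · have : (0:ℝ) ≤ (⌊s * n / t⌋₊ : ℝ) * t / n := by positivity
      linarith [hk.1]
    · have : ((⌊s * n / t⌋₊:ℝ) + 1) * t / n ≤ t := by
        rw [div_le_iff₀ hn0]; nlinarith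
      linarith [hk.2]
  obtain ⟨C, hC⟩ : ∃ C, ∀ x ∈ Set.Icc (0:ℝ) t, ‖g x‖ ≤ C :=
    isCompact_Icc.exists_bound_of_continuousOn hg.continuousOn
  have hmeas : ∀ n : ℕ, Measurable (st n) := by
    intro n
    exact hg.measurable.comp (measurable_from_nat.comp
      (((measurable_mul_const (n:ℝ)).div_const t).nat_floor))
  -- Part B : convergence of step integrals
  have hB : Tendsto (fun n : ℕ => ∫ s in (0:ℝ)..t, st n s) atTop
      (𝓝 (∫ s in (0:ℝ)..t, g s)) := by
    apply intervalIntegral.tendsto_integral_filter_of_dominated_convergence (fun _ => C)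
    · exact Eventually.of_forall fun n => (hmeas n).aestronglyMeasurable
    · filter_upwards [eventually_gt_atTop 0] with n hn
      filter_upwards [ae_ne_real t] with x hx hmem
      rw [uIoc_of_le ht.le] at hmem
      have hxo : x ∈ Set.Ioo (0:ℝ) t := ⟨hmem.1, lt_of_le_of_ne hmem.2 hx⟩
      exact hC _ (htagmem n hn x hxo)
    · exact intervalIntegrable_const
    · filter_upwards [ae_ne_real t] with x hx hmem
      rw [uIoc_of_le ht.le] at hmem
      have hxo : x ∈ Set.Ioo (0:ℝ) t := ⟨hmem.1, lt_of_le_of_ne hmem.2 hx⟩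
      have hlim : Tendsto (fun n : ℕ => ξ n ⌊x * n / t⌋₊) atTop (𝓝 x) := by
        rw [tendsto_iff_dist_tendsto_zero]
        apply squeeze_zero' (Eventually.of_forall fun n => dist_nonneg)
          (g := fun n : ℕ => t / n)
        · filter_upwards [eventually_gt_atTop 0] with n hn
          rw [Real.dist_eq]
          exact htag n hn x hxo
        · exact tendsto_const_div_atTop_nhds_zero_nat t
      exact (hg.tendsto x).comp hlim
  -- Part A : step integrals equal Riemann sums
  have hA : ∀ n : ℕ, 0 < n →
      ∫ s in (0:ℝ)..t, st n s = (t / n) * ∑ k ∈ Finset.range n, g (ξ n k) := by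
    intro n hn
    have hn0 : (0:ℝ) < n := by exact_mod_cast hn
    set a : ℕ → ℝ := fun k => (k : ℝ) * t / n with ha
    have hdiff : ∀ k : ℕ, a (k + 1) - a k = t / n := by
      intro k; simp only [ha]; push_cast; ring
    have hmono : ∀ k : ℕ, a k < a (k + 1) := by
      intro k
      have h1 : (0:ℝ) < t / n := div_pos ht hn0
      linarith [hdiff k]
    have hconst : ∀ k, k < n → ∀ᵐ x, x ∈ Set.uIoc (a k) (a (k+1)) → st n x = g (ξ n k) := by
      intro k hk
      filter_upwards [ae_ne_real (a (k+1))] with x hx hmem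
      rw [uIoc_of_le (hmono k).le] at hmem
      have hxo : x ∈ Set.Ioo (a k) (a (k+1)) := ⟨hmem.1, lt_of_le_of_ne hmem.2 hx⟩
      have hl : (k:ℝ) * t / n < x := hxo.1
      have hr : x < ((k:ℝ) + 1) * t / n := by
        have h2 := hxo.2
        simp only [ha] at h2
        push_cast at h2
        exact h2
      rw [div_lt_iff₀ hn0] at hl
      rw [lt_div_iff₀ hn0] at hr
      have hx0 : (0:ℝ) < x := by nlinarith [Nat.cast_nonneg (α := ℝ) k]
      have hfl : ⌊x * n / t⌋₊ = k := by
        rw [Nat.floor_eq_iff (by positivity)]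
        constructor
        · rw [le_div_iff₀ ht]; nlinarith
        · rw [div_lt_iff₀ ht]; nlinarith
      simp only [hst, hfl]
    have hint : ∀ k, k < n → IntervalIntegrable (st n) volume (a k) (a (k+1)) := by
      intro k hk
      refine (intervalIntegrable_const (c := g (ξ n k))).congr_ae ?_
      exact (ae_restrict_iff' measurableSet_uIoc).mpr
        ((hconst k hk).mono fun x h hx => (h hx).symm)
    have hval : ∀ k, k < n → ∫ x in a k..a (k+1), st n x = (t / n) * g (ξ n k) := by
      intro k hk
      rw [intervalIntegral.integral_congr_ae (hconst k hk),
        intervalIntegral.integral_const, smul_eq_mul, hdiff k]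
    have hsum := intervalIntegral.sum_integral_adjacent_intervals
      (f := st n) (a := a) (μ := volume) (n := n) (fun k hk => hint k hk)
    have ha0 : a 0 = 0 := by simp [ha]
    have han : a n = t := by simp only [ha]; field_simp
    rw [ha0, han] at hsum
    rw [← hsum, Finset.mul_sum]
    exact Finset.sum_congr rfl fun k hk => hval k (Finset.mem_range.mp hk)
  refine hB.congr' ?_
  filter_upwards [eventually_gt_atTop 0] with n hn
  exact hA n hn

lemma gauss_neg (v : ℝ≥0) {s : Set ℝ} (hs : MeasurableSet s) :
    gaussianReal 0 v (Neg.neg ⁻¹' s) = gaussianReal 0 v s := by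
  have h1 : (gaussianReal 0 v).map (fun x : ℝ => -x) = gaussianReal 0 v := by
    have h2 := gaussianReal_map_const_mul (μ := 0) (v := v) (-1)
    have h3 : (fun x : ℝ => (-1 : ℝ) * x) = fun x : ℝ => -x := by funext x; ring
    have h4 : (NNReal.mk ((-1:ℝ)^2) (sq_nonneg _) : ℝ≥0) = 1 := by ext; norm_num
    rw [h3, h4, one_mul, mul_zero] at h2
    exact h2
  calc gaussianReal 0 v (Neg.neg ⁻¹' s)
      = (gaussianReal 0 v).map (fun x : ℝ => -x) s := by
        rw [Measure.map_apply measurable_neg hs]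
    _ = gaussianReal 0 v s := by rw [h1]

theorem grid_law {Ω : Type*} [MeasureSpace Ω] [IsProbabilityMeasure (ℙ : Measure Ω)]
    (B : ℝ → Ω → ℝ) (hB : IsBrownianMotion B) {t : ℝ} (ht : 0 < t) (n : ℕ) (hn : 0 < n) :
    Measure.map (fun ω (k : Fin (n+1)) => B ((k : ℝ) * t / n) ω) ℙ
      = Measure.map (fun ω (k : Fin (n+1)) => B (t - (k : ℝ) * t / n) ω - B t ω) ℙ := by
  have hn0 : (0:ℝ) < n := by exact_mod_cast hn
  set ν : ℝ≥0 := (t/n).toNNReal with hν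
  set τ : ℕ → ℝ := fun k => (k:ℝ) * t / n with hτ
  -- increments
  set X : Fin n → Ω → ℝ := fun j ω => B (τ (j.val+1)) ω - B (τ j.val) ω with hX
  set Y : Fin n → Ω → ℝ := fun j ω => B (t - τ (j.val+1)) ω - B (t - τ j.val) ω with hY
  have hτmono : Monotone (fun k : Fin (n+1) => τ k.val) := by
    intro a b hab
    simp only [hτ]
    have : (a.val : ℝ) ≤ b.val := by exact_mod_cast (Fin.le_def.mp hab)
    have ht' : (0:ℝ) ≤ t := ht.le
    have hmul : (a.val : ℝ) * t ≤ (b.val : ℝ) * t := by nlinarith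
    exact div_le_div_of_nonneg_right hmul hn0.le
  have hτ0 : τ 0 = 0 := by simp [hτ]
  have hτt : τ n = t := by simp only [hτ]; field_simp
  have hτnn : ∀ k : ℕ, 0 ≤ τ k := by
    intro k; simp only [hτ]; positivity
  have hτle : ∀ k : ℕ, τ k ≤ τ (k+1) := by
    intro k; simp only [hτ]; push_cast
    have : (k:ℝ) * t ≤ ((k:ℝ)+1) * t := by nlinarith
    exact div_le_div_of_nonneg_right this hn0.le
  have hτlen : ∀ k : ℕ, k ≤ n → τ k ≤ t := by
    intro k hk
    simp only [hτ]
    rw [div_le_iff₀ hn0]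
    have : (k:ℝ) ≤ n := by exact_mod_cast hk
    nlinarith
  -- measurability
  have hXm : ∀ j, Measurable (X j) := fun j => (hB.meas _).sub (hB.meas _)
  have hYm : ∀ j, Measurable (Y j) := fun j => (hB.meas _).sub (hB.meas _)
  -- independence of X
  have hXind : iIndepFun X ℙ := by
    exact hB.indep n (fun k => τ k.val) hτmono (by simp [hτ0])
  -- marginal laws of X
  have hXlaw : ∀ j : Fin n, Measure.map (X j) ℙ = gaussianReal 0 ν := by
    intro j
    have h := hB.incr (τ j.val) (τ (j.val+1)) (hτnn _) (hτle _)
    have hd : τ (j.val+1) - τ j.val = t / n := by simp only [hτ]; push_cast; ring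
    rw [hd] at h
    exact h
  -- Y in terms of X
  have hYX : ∀ j : Fin n, Y j = fun ω => - X j.rev ω := by
    intro j
    funext ω
    have hj : j.val < n := j.isLt
    have hrev : (j.rev : ℕ) = n - 1 - j.val := by
      simp [Fin.rev]; omega
    have h1 : t - τ (j.val + 1) = τ (n - 1 - j.val) := by
      simp only [hτ]
      rw [Nat.cast_sub (by omega : j.val ≤ n - 1), Nat.cast_sub (by omega : 1 ≤ n)]
      push_cast
      field_simp
      ring
    have h2 : t - τ j.val = τ (n - 1 - j.val + 1) := by
      simp only [hτ]
      have e : n - 1 - j.val + 1 = n - j.val := by omega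
      rw [e, Nat.cast_sub (by omega : j.val ≤ n)]
      field_simp
    simp only [hY, hX, hrev, h1, h2]
    ring
  -- vector laws
  set Xv : Ω → (Fin n → ℝ) := fun ω j => X j ω with hXv
  set Yv : Ω → (Fin n → ℝ) := fun ω j => Y j ω with hYv
  have hXvm : Measurable Xv := measurable_pi_lambda _ hXm
  have hYvm : Measurable Yv := measurable_pi_lambda _ hYm
  have lawXY : Measure.map Xv ℙ = Measure.map Yv ℙ := by
    have _ : IsProbabilityMeasure (Measure.map Xv ℙ) :=
      Measure.isProbabilityMeasure_map hXvm.aemeasurable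
    have _ : IsProbabilityMeasure (Measure.map Yv ℙ) :=
      Measure.isProbabilityMeasure_map hYvm.aemeasurable
    refine ext_of_generate_finite _ generateFrom_pi.symm isPiSystem_pi ?_ ?_
    · rintro s ⟨f, hf, rfl⟩
      have hfm : ∀ i, MeasurableSet (f i) := fun i => hf i trivial
      have hpi : MeasurableSet (Set.pi Set.univ f) := MeasurableSet.univ_pi hfm
      rw [Measure.map_apply hXvm hpi, Measure.map_apply hYvm hpi]
      have hXpre : Xv ⁻¹' Set.pi Set.univ f = ⋂ j ∈ (Finset.univ : Finset (Fin n)), X j ⁻¹' f j := by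
        ext ω; simp [hXv, Set.mem_pi]
      have hYpre : Yv ⁻¹' Set.pi Set.univ f
          = ⋂ j ∈ (Finset.univ : Finset (Fin n)), X j ⁻¹' (Neg.neg ⁻¹' f j.rev) := by
        ext ω
        simp only [Set.mem_preimage, Set.mem_pi, Set.mem_univ, true_implies, Set.mem_iInter,
          hYv, Finset.mem_univ]
        constructor
        · intro h j
          have := h j.rev
          rw [hYX j.rev] at this
          simpa [Fin.rev_rev] using this
        · intro h j
          rw [hYX j]
          simpa [Fin.rev_rev] using h j.rev
      rw [hXpre, hYpre,
        hXind.measure_inter_preimage_eq_mul Finset.univ (fun i _ => hfm i),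
        hXind.measure_inter_preimage_eq_mul Finset.univ
          (fun i _ => measurable_neg (hfm i.rev))]
      have hval : ∀ (g : Fin n → Set ℝ), (∀ i, MeasurableSet (g i)) →
          ∀ j, ℙ (X j ⁻¹' g j) = gaussianReal 0 ν (g j) := by
        intro g hg j
        rw [← Measure.map_apply (hXm j) (hg j), hXlaw j]
      calc ∏ j : Fin n, ℙ (X j ⁻¹' f j)
          = ∏ j : Fin n, gaussianReal 0 ν (f j) :=
            Finset.prod_congr rfl fun j _ => hval f hfm j
        _ = ∏ j : Fin n, gaussianReal 0 ν (f (Fin.revPerm j)) :=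
            (Equiv.prod_comp Fin.revPerm (fun j => gaussianReal 0 ν (f j))).symm
        _ = ∏ j : Fin n, ℙ (X j ⁻¹' (Neg.neg ⁻¹' f j.rev)) := by
            refine Finset.prod_congr rfl fun j _ => ?_
            rw [hval (fun i => Neg.neg ⁻¹' f i.rev) (fun i => measurable_neg (hfm i.rev)) j,
              gauss_neg ν (hfm j.rev)]
            simp
    · simp [Measure.map_apply hXvm MeasurableSet.univ,
        Measure.map_apply hYvm MeasurableSet.univ]
  -- cumulative sums
  set C : (Fin n → ℝ) → (Fin (n+1) → ℝ) :=
    fun x k => ∑ j ∈ Finset.range k.val, (if h : j < n then x ⟨j, h⟩ else 0) with hC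
  have hCm : Measurable C := by
    apply measurable_pi_lambda
    intro k
    apply Finset.measurable_sum
    intro j _
    by_cases h : j < n
    · simpa [h] using measurable_pi_apply (⟨j, h⟩ : Fin n)
    · simpa [h] using (measurable_const : Measurable fun _ : Fin n → ℝ => (0:ℝ))
  have hCsum : ∀ (a : ℕ → ℝ) (k : Fin (n+1)),
      C (fun j : Fin n => a (j.val+1) - a j.val) k = a k.val - a 0 := by
    intro a k
    have hk : k.val ≤ n := Nat.lt_succ_iff.mp k.isLt
    have hcong : ∀ j ∈ Finset.range k.val,
        (if h : j < n then (fun j : Fin n => a (j.val+1) - a j.val) ⟨j,h⟩ else 0)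
          = a (j+1) - a j := by
      intro j hj
      have hjn : j < n := lt_of_lt_of_le (Finset.mem_range.mp hj) hk
      simp [hjn]
    simp only [hC]
    rw [Finset.sum_congr rfl hcong, Finset.sum_range_sub]
  -- transfer along cumulative sums
  have hgridB : (fun ω (k : Fin (n+1)) => B ((k:ℝ)*t/n) ω) =ᵐ[ℙ] (fun ω => C (Xv ω)) := by
    filter_upwards [hB.init] with ω h0
    funext k
    have h := hCsum (fun m => B (τ m) ω) k
    simp only [hXv, hX] at h ⊢
    rw [h]
    simp [hτ0, h0, hτ]
  have hgridW : (fun ω (k : Fin (n+1)) => B (t - (k:ℝ)*t/n) ω - B t ω)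
      = (fun ω => C (Yv ω)) := by
    funext ω k
    have h := hCsum (fun m => B (t - τ m) ω) k
    simp only [hYv, hY] at h ⊢
    rw [h]
    simp [hτ0, hτ]
  calc Measure.map (fun ω (k : Fin (n+1)) => B ((k:ℝ)*t/n) ω) ℙ
      = Measure.map (fun ω => C (Xv ω)) ℙ := Measure.map_congr hgridB
    _ = Measure.map C (Measure.map Xv ℙ) := (Measure.map_map hCm hXvm).symm
    _ = Measure.map C (Measure.map Yv ℙ) := by rw [lawXY]
    _ = Measure.map (fun ω => C (Yv ω)) ℙ := Measure.map_map hCm hYvm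
    _ = Measure.map (fun ω (k : Fin (n+1)) => B (t - (k:ℝ)*t/n) ω - B t ω) ℙ := by
        rw [← hgridW]


/-- **Time-reversal identity.** For every fixed `t > 0`, the random vector
`(A_t, exp(-2 B_t) · A_t)` has the same law as `(exp(-2 B_t) · A_t, A_t)`. -/
theorem time_reversal_identity {Ω : Type*} [MeasureSpace Ω]
    [IsProbabilityMeasure (ℙ : Measure Ω)]
    (B : ℝ → Ω → ℝ) (hB : IsBrownianMotion B) (t : ℝ) (ht : 0 < t) :
    Measure.map (fun ω =>
        (expFunctional B t ω, Real.exp (-2 * B t ω) * expFunctional B t ω)) ℙ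
      = Measure.map (fun ω =>
        (Real.exp (-2 * B t ω) * expFunctional B t ω, expFunctional B t ω)) ℙ := by
  classical
  -- approximating functionals
  set φ : (n : ℕ) → (Fin (n+1) → ℝ) → ℝ × ℝ := fun n v =>
    ((t/n) * ∑ k : Fin n, Real.exp (2 * v k.castSucc),
      Real.exp (-2 * v (Fin.last n)) * ((t/n) * ∑ k : Fin n, Real.exp (2 * v k.castSucc)))
    with hφ
  have hφm : ∀ n, Measurable (φ n) := by
    intro n
    have hS : Measurable fun v : Fin (n+1) → ℝ =>
        (t/n) * ∑ k : Fin n, Real.exp (2 * v k.castSucc) :=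
      measurable_const.mul (Finset.measurable_sum _ fun k _ =>
        Real.measurable_exp.comp (measurable_const.mul (measurable_pi_apply _)))
    exact ((hS).prodMk
      (((Real.measurable_exp.comp (measurable_const.mul (measurable_pi_apply _)))).mul hS))
  set gridB : (n : ℕ) → Ω → (Fin (n+1) → ℝ) :=
    fun n ω k => B ((k : ℝ) * t / n) ω with hgridB
  set gridW : (n : ℕ) → Ω → (Fin (n+1) → ℝ) :=
    fun n ω k => B (t - (k : ℝ) * t / n) ω - B t ω with hgridW
  have hgridBm : ∀ n, Measurable (gridB n) :=
    fun n => measurable_pi_lambda _ fun k => hB.meas _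
  have hgridWm : ∀ n, Measurable (gridW n) :=
    fun n => measurable_pi_lambda _ fun k => (hB.meas _).sub (hB.meas _)
  set Gn : ℕ → Ω → ℝ × ℝ := fun n ω => φ n (gridB n ω) with hGn
  set Hn : ℕ → Ω → ℝ × ℝ := fun n ω => φ n (gridW n ω) with hHn
  have hGm : ∀ n, Measurable (Gn n) := fun n => (hφm n).comp (hgridBm n)
  have hHm : ∀ n, Measurable (Hn n) := fun n => (hφm n).comp (hgridWm n)
  have lawn : ∀ n : ℕ, 0 < n → Measure.map (Gn n) ℙ = Measure.map (Hn n) ℙ := by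
    intro n hn
    calc Measure.map (Gn n) ℙ
        = Measure.map (φ n) (Measure.map (gridB n) ℙ) :=
          (Measure.map_map (hφm n) (hgridBm n)).symm
      _ = Measure.map (φ n) (Measure.map (gridW n) ℙ) := by
          rw [grid_law B hB ht n hn]
      _ = Measure.map (Hn n) ℙ := Measure.map_map (hφm n) (hgridWm n)
  -- limits
  set F : Ω → ℝ × ℝ := fun ω =>
    (expFunctional B t ω, Real.exp (-2 * B t ω) * expFunctional B t ω) with hF
  set F' : Ω → ℝ × ℝ := fun ω =>
    (Real.exp (-2 * B t ω) * expFunctional B t ω, expFunctional B t ω) with hF'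
  have hconv : ∀ᵐ ω ∂(ℙ : Measure Ω),
      Tendsto (fun n => Gn n ω) atTop (𝓝 (F ω)) ∧
      Tendsto (fun n => Hn n ω) atTop (𝓝 (F' ω)) := by
    filter_upwards [hB.cont, hB.init] with ω hcont h0
    set g : ℝ → ℝ := fun s => Real.exp (2 * B s ω) with hg
    have hgc : Continuous g := Real.continuous_exp.comp (continuous_const.mul hcont)
    have hA : expFunctional B t ω = ∫ s in (0:ℝ)..t, g s := rfl
    have hn0 : ∀ n : ℕ, 0 < n → (0:ℝ) < n := fun n hn => by exact_mod_cast hn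
    -- left endpoint sums
    have hR1 : Tendsto (fun n : ℕ => (t/n) * ∑ k ∈ Finset.range n, g ((k:ℝ) * t / n))
        atTop (𝓝 (expFunctional B t ω)) := by
      rw [hA]
      apply riemann_tendsto hgc ht (fun n k => (k:ℝ) * t / n)
      intro n k hk
      have h1 : (0:ℝ) < n := hn0 n (Nat.zero_lt_of_lt hk)
      refine ⟨le_rfl, ?_⟩
      have : (k:ℝ) * t ≤ ((k:ℝ)+1) * t := by nlinarith
      exact div_le_div_of_nonneg_right this h1.le
    -- right endpoint sums
    have hR2 : Tendsto (fun n : ℕ => (t/n) * ∑ k ∈ Finset.range n, g (t - (k:ℝ) * t / n))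
        atTop (𝓝 (expFunctional B t ω)) := by
      have hR2' : Tendsto (fun n : ℕ => (t/n) * ∑ k ∈ Finset.range n, g (((k:ℝ)+1) * t / n))
          atTop (𝓝 (expFunctional B t ω)) := by
        rw [hA]
        apply riemann_tendsto hgc ht (fun n k => ((k:ℝ)+1) * t / n)
        intro n k hk
        have h1 : (0:ℝ) < n := hn0 n (Nat.zero_lt_of_lt hk)
        refine ⟨?_, le_rfl⟩
        have : (k:ℝ) * t ≤ ((k:ℝ)+1) * t := by nlinarith
        exact div_le_div_of_nonneg_right this h1.le
      refine hR2'.congr' ?_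
      filter_upwards [eventually_gt_atTop 0] with n hn
      congr 1
      rw [← Finset.sum_range_reflect]
      refine Finset.sum_congr rfl fun j hj => ?_
      have hjn : j < n := Finset.mem_range.mp hj
      congr 1
      have h1 : (0:ℝ) < n := hn0 n hn
      rw [Nat.cast_sub (by omega : j ≤ n - 1), Nat.cast_sub (by omega : 1 ≤ n)]
      push_cast
      field_simp
      ring
    -- values of the approximants
    have hGval : ∀ n : ℕ, 0 < n → Gn n ω =
        ((t/n) * ∑ k ∈ Finset.range n, g ((k:ℝ)*t/n),
         Real.exp (-2 * B t ω) * ((t/n) * ∑ k ∈ Finset.range n, g ((k:ℝ)*t/n))) := by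
      intro n hn
      have h1 : (0:ℝ) < n := hn0 n hn
      have hsum : ∑ k : Fin n, Real.exp (2 * gridB n ω k.castSucc)
          = ∑ k ∈ Finset.range n, g ((k:ℝ)*t/n) := by
        rw [← Fin.sum_univ_eq_sum_range (fun k : ℕ => g ((k:ℝ)*t/n)) n]
        refine Finset.sum_congr rfl fun k _ => ?_
        simp only [hgridB, hg, Fin.coe_castSucc]
      have hlastB : gridB n ω (Fin.last n) = B t ω := by
        simp only [hgridB, Fin.val_last]
        congr 1
        field_simp
      simp only [hGn, hφ, hsum, hlastB]
    have hHval : ∀ n : ℕ, 0 < n → Hn n ω =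
        (Real.exp (-2 * B t ω) * ((t/n) * ∑ k ∈ Finset.range n, g (t - (k:ℝ)*t/n)),
         (t/n) * ∑ k ∈ Finset.range n, g (t - (k:ℝ)*t/n)) := by
      intro n hn
      have h1 : (0:ℝ) < n := hn0 n hn
      have hsum : ∑ k : Fin n, Real.exp (2 * gridW n ω k.castSucc)
          = Real.exp (-2 * B t ω) * ∑ k ∈ Finset.range n, g (t - (k:ℝ)*t/n) := by
        rw [Finset.mul_sum, ← Fin.sum_univ_eq_sum_range
          (fun k : ℕ => Real.exp (-2 * B t ω) * g (t - (k:ℝ)*t/n)) n]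
        refine Finset.sum_congr rfl fun k _ => ?_
        simp only [hgridW, hg, Fin.coe_castSucc, ← Real.exp_add]
        congr 1
        ring
      have hlastW : gridW n ω (Fin.last n) = - B t ω := by
        simp only [hgridW, Fin.val_last]
        have h2 : t - (n:ℝ) * t / n = 0 := by field_simp; ring
        rw [h2, h0]
        ring
      simp only [hHn, hφ, hsum, hlastW, Prod.mk.injEq]
      constructor
      · ring
      · have key : rexp (-2 * -B t ω) * rexp (-2 * B t ω) = 1 := by
          rw [← Real.exp_add]
          have h3 : -2 * -B t ω + -2 * B t ω = 0 := by ring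
          rw [h3, Real.exp_zero]
        linear_combination (t / (n:ℝ) * ∑ k ∈ Finset.range n, g (t - (k:ℝ) * t / n)) * key
    constructor
    · refine Tendsto.congr' ?_ (hR1.prodMk_nhds (hR1.const_mul (Real.exp (-2 * B t ω))))
      filter_upwards [eventually_gt_atTop 0] with n hn
      exact (hGval n hn).symm
    · refine Tendsto.congr' ?_ ((hR2.const_mul (Real.exp (-2 * B t ω))).prodMk_nhds hR2)
      filter_upwards [eventually_gt_atTop 0] with n hn
      exact (hHval n hn).symm
  -- a.e. measurability of the limits
  have hFae : AEMeasurable F (ℙ : Measure Ω) :=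
    aemeasurable_of_tendsto_metrizable_ae atTop (fun n => (hGm n).aemeasurable)
      (hconv.mono fun ω h => h.1)
  have hF'ae : AEMeasurable F' (ℙ : Measure Ω) :=
    aemeasurable_of_tendsto_metrizable_ae atTop (fun n => (hHm n).aemeasurable)
      (hconv.mono fun ω h => h.2)
  have hPF : IsProbabilityMeasure (Measure.map F ℙ) := Measure.isProbabilityMeasure_map hFae
  have hPF' : IsProbabilityMeasure (Measure.map F' ℙ) := Measure.isProbabilityMeasure_map hF'ae
  show Measure.map F ℙ = Measure.map F' ℙ
  apply ext_of_forall_lintegral_eq_of_IsFiniteMeasure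
  intro f
  set fr : ℝ × ℝ → ℝ := fun x => (f x : ℝ) with hfr
  have hfrc : Continuous fr := NNReal.continuous_coe.comp f.continuous
  obtain ⟨C, hC⟩ := f.bounded
  set M : ℝ := C + (f (0,0) : ℝ) with hM
  have hbd : ∀ x, ‖fr x‖ ≤ M := by
    intro x
    have h1 : dist (f x) (f (0,0)) ≤ C := hC x (0,0)
    rw [NNReal.dist_eq] at h1
    have h2 : |(f x : ℝ) - (f (0,0) : ℝ)| ≤ C := h1
    have h3 : (0:ℝ) ≤ (f x : ℝ) := (f x).coe_nonneg
    rw [hfr, Real.norm_eq_abs, abs_of_nonneg h3]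
    have := abs_le.mp h2
    linarith [this.2]
  have hint : ∀ (μ : Measure (ℝ × ℝ)) [IsProbabilityMeasure μ], Integrable fr μ := by
    intro μ _
    exact (integrable_const M).mono' hfrc.aestronglyMeasurable (ae_of_all _ hbd)
  have key : ∫ ω, fr (F ω) ∂(ℙ : Measure Ω) = ∫ ω, fr (F' ω) ∂(ℙ : Measure Ω) := by
    have h1 : Tendsto (fun n => ∫ ω, fr (Gn n ω) ∂(ℙ : Measure Ω)) atTop
        (𝓝 (∫ ω, fr (F ω) ∂(ℙ : Measure Ω))) := by
      apply tendsto_integral_of_dominated_convergence (fun _ => M)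
      · exact fun n => (hfrc.measurable.comp (hGm n)).aestronglyMeasurable
      · exact integrable_const _
      · exact fun n => ae_of_all _ fun ω => hbd _
      · exact hconv.mono fun ω h => (hfrc.tendsto _).comp h.1
    have h2 : Tendsto (fun n => ∫ ω, fr (Hn n ω) ∂(ℙ : Measure Ω)) atTop
        (𝓝 (∫ ω, fr (F' ω) ∂(ℙ : Measure Ω))) := by
      apply tendsto_integral_of_dominated_convergence (fun _ => M)
      · exact fun n => (hfrc.measurable.comp (hHm n)).aestronglyMeasurable
      · exact integrable_const _
      · exact fun n => ae_of_all _ fun ω => hbd _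
      · exact hconv.mono fun ω h => (hfrc.tendsto _).comp h.2
    have heq : (fun n => ∫ ω, fr (Gn n ω) ∂(ℙ : Measure Ω))
        =ᶠ[atTop] fun n => ∫ ω, fr (Hn n ω) ∂(ℙ : Measure Ω) := by
      filter_upwards [eventually_gt_atTop 0] with n hn
      rw [← integral_map (hGm n).aemeasurable hfrc.aestronglyMeasurable,
          ← integral_map (hHm n).aemeasurable hfrc.aestronglyMeasurable, lawn n hn]
    exact tendsto_nhds_unique (Tendsto.congr' heq h1) h2
  calc ∫⁻ x, f x ∂(Measure.map F ℙ)
      = ENNReal.ofReal (∫ x, fr x ∂(Measure.map F ℙ)) :=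
        lintegral_coe_eq_integral f (hint _)
    _ = ENNReal.ofReal (∫ ω, fr (F ω) ∂(ℙ : Measure Ω)) := by
        rw [integral_map hFae hfrc.aestronglyMeasurable]
    _ = ENNReal.ofReal (∫ ω, fr (F' ω) ∂(ℙ : Measure Ω)) := by rw [key]
    _ = ENNReal.ofReal (∫ x, fr x ∂(Measure.map F' ℙ)) := by
        rw [integral_map hF'ae hfrc.aestronglyMeasurable]
    _ = ∫⁻ x, f x ∂(Measure.map F' ℙ) := (lintegral_coe_eq_integral f (hint _)).symm
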